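/- Let T be a string of length t and let k ≥ 0 be an integer. Then the set of periods p of T satisfying t ≤ 2^{k+1}·(t − p) and 2^k·(t − p) ≤ t (i.e. the periods lying between t − t/2^k and t − t/2^{k+1}) is a single arithmetic progression. -/

import Mathlib

/-- `r` is a period of the prefix of `T` of length `X` (in the `getElem?` sense). -/
def PerQ {α : Type*} (T : List α) (X r : ℕ) : Prop :=
  ∀ i, i + r < X → T[i]? = T[i + r]?

lemma perQ_zero {α : Type*} (T : List α) (X : ℕ) : PerQ T X 0 := by
  intro i _; rfl

lemma perQ_add {α : Type*} {T : List α} {X u v : ℕ}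
    (hu : PerQ T X u) (hv : PerQ T X v) : PerQ T X (u + v) := by
  intro i hi
  calc T[i]? = T[i + u]? := hu i (by omega)
    _ = T[i + u + v]? := hv (i + u) (by omega)
    _ = T[i + (u + v)]? := by rw [Nat.add_assoc]

lemma perQ_mul {α : Type*} {T : List α} {X d : ℕ}
    (hd : PerQ T X d) (j : ℕ) : PerQ T X (j * d) := by
  induction j with
  | zero => simpa using perQ_zero T X
  | succ n ih =>
    have := perQ_add ih hd
    simpa [Nat.succ_mul] using this

lemma perQ_sub {α : Type*} {T : List α} {X r s : ℕ}
    (hr : PerQ T X r) (hs : PerQ T X s) (hrs : r ≤ s) (hX : r + s ≤ X) :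
    PerQ T X (s - r) := by
  intro i hi
  by_cases h : i + s < X
  · have h2 := hr (i + (s - r)) (by omega)
    rw [show i + (s - r) + r = i + s by omega] at h2
    calc T[i]? = T[i + s]? := hs i h
      _ = T[i + (s - r)]? := h2.symm
  · have hir : r ≤ i := by omega
    have h1 := hr (i - r) (by omega)
    rw [show i - r + r = i by omega] at h1
    have h2 := hs (i - r) (by omega)
    rw [show i - r + s = i + (s - r) by omega] at h2
    calc T[i]? = T[i - r]? := h1.symm
      _ = T[i + (s - r)]? := h2

lemma perQ_gcd_aux {α : Type*} {T : List α} {X : ℕ} :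
    ∀ n r s, r + s ≤ n → PerQ T X r → PerQ T X s → r + s ≤ X →
      PerQ T X (Nat.gcd r s) := by
  intro n
  induction n with
  | zero =>
    intro r s hn hr _ _
    have hr0 : r = 0 := by omega
    have hs0 : s = 0 := by omega
    subst hr0; subst hs0
    simpa using perQ_zero T X
  | succ n ih =>
    intro r s hn hr hs hX
    rcases Nat.eq_zero_or_pos r with h0 | hrpos
    · subst h0; simpa using hs
    rcases Nat.eq_zero_or_pos s with h0 | hspos
    · subst h0; simpa using hr
    rcases le_or_gt r s with hle | hlt
    · rw [← Nat.gcd_sub_self_right hle]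
      exact ih r (s - r) (by omega) hr (perQ_sub hr hs hle hX) (by omega)
    · rw [Nat.gcd_comm, ← Nat.gcd_sub_self_right hlt.le]
      exact ih s (r - s) (by omega) hs (perQ_sub hs hr hlt.le (by omega)) (by omega)

lemma perQ_gcd {α : Type*} {T : List α} {X r s : ℕ}
    (hr : PerQ T X r) (hs : PerQ T X s) (hX : r + s ≤ X) :
    PerQ T X (Nat.gcd r s) :=
  perQ_gcd_aux (r + s) r s le_rfl hr hs hX

/-- If `a ≤ p ≤ t` are both periods of `T` (of length `t`), then `p - a` is a
period of the prefix of length `t - a`. -/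
lemma perQ_shrink {α : Type*} {T : List α} {a p : ℕ}
    (ha : PerQ T T.length a) (hp : PerQ T T.length p)
    (hap : a ≤ p) (hpt : p ≤ T.length) :
    PerQ T (T.length - a) (p - a) := by
  intro i hi
  have hip : i + p < T.length := by omega
  have h2 := ha (i + (p - a)) (by omega)
  rw [show i + (p - a) + a = i + p by omega] at h2
  calc T[i]? = T[i + p]? := hp i hip
    _ = T[i + (p - a)]? := h2.symm

/-- If `a` is a period of `T` and `r` a period of its prefix of length `t - a`,
then `a + r` is a period of `T`. -/
lemma perQ_extend {α : Type*} {T : List α} {a r : ℕ}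
    (ha : PerQ T T.length a) (hr : PerQ T (T.length - a) r) :
    PerQ T T.length (a + r) := by
  intro i hi
  have h1 := hr i (by omega)
  have h2 := ha (i + r) (by omega)
  rw [show i + r + a = i + (a + r) by omega] at h2
  calc T[i]? = T[i + r]? := h1
    _ = T[i + (a + r)]? := h2

lemma stmt_9_aux {α : Type*} (T : List α) (k : ℕ) :
    ∃ a d m : ℕ, ∀ p : ℕ,
      (p ≤ T.length ∧ PerQ T T.length p ∧
        T.length ≤ 2 ^ (k + 1) * (T.length - p) ∧
        2 ^ k * (T.length - p) ≤ T.length) ↔ ∃ i < m, p = a + i * d := by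
  classical
  set t := T.length with ht
  set Sp : ℕ → Prop := fun p => p ≤ t ∧ PerQ T t p ∧
      t ≤ 2 ^ (k + 1) * (t - p) ∧ 2 ^ k * (t - p) ≤ t with hSp
  by_cases hS : ∃ p, Sp p
  · -- nonempty case
    set a : ℕ := sInf {p | Sp p} with hadef
    have haS : Sp a := Nat.sInf_mem hS
    have hamin : ∀ p, Sp p → a ≤ p := fun p hp => Nat.sInf_le hp
    obtain ⟨hat, haP, ha1, ha2⟩ := haS
    set X : ℕ := t - a with hX
    have hpow : (0:ℕ) < 2 ^ k := pow_pos (by norm_num) k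
    have hpow1 : (2:ℕ) ^ (k + 1) = 2 ^ k * 2 := pow_succ 2 k
    -- Claim A : every p ∈ S gives a period p - a of the prefix with 2(p-a) ≤ X
    have claimA : ∀ p, Sp p → PerQ T X (p - a) ∧ 2 * (p - a) ≤ X := by
      intro p hp
      obtain ⟨hpt, hpP, hp1, hp2⟩ := hp
      have hap : a ≤ p := hamin p ⟨hpt, hpP, hp1, hp2⟩
      refine ⟨perQ_shrink haP hpP hap hpt, ?_⟩
      -- X ≤ 2 * (t - p)
      have h1 : 2 ^ k * X ≤ 2 ^ k * (2 * (t - p)) := by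
        calc 2 ^ k * X ≤ t := ha2
          _ ≤ 2 ^ (k + 1) * (t - p) := hp1
          _ = 2 ^ k * (2 * (t - p)) := by rw [hpow1]; ring
      have h2 : X ≤ 2 * (t - p) := Nat.le_of_mul_le_mul_left h1 hpow
      omega
    by_cases hd : ∃ r, r ≠ 0 ∧ PerQ T X r ∧ 2 * r ≤ X
    · -- there is a nontrivial small period of the prefix
      set d : ℕ := sInf {r | r ≠ 0 ∧ PerQ T X r ∧ 2 * r ≤ X} with hddef
      have hdS : d ≠ 0 ∧ PerQ T X d ∧ 2 * d ≤ X := Nat.sInf_mem hd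
      obtain ⟨hd0, hdP, hd2⟩ := hdS
      have hdmin : ∀ r, r ≠ 0 → PerQ T X r → 2 * r ≤ X → d ≤ r :=
        fun r h1 h2 h3 => Nat.sInf_le ⟨h1, h2, h3⟩
      have hdvd : ∀ r, PerQ T X r → 2 * r ≤ X → d ∣ r := by
        intro r hrP hr2
        rcases Nat.eq_zero_or_pos r with h0 | hrpos
        · simp [h0]
        have hdr : d ≤ r := hdmin r (by omega) hrP hr2
        have hgP : PerQ T X (Nat.gcd d r) := perQ_gcd hdP hrP (by omega)
        have hg0 : Nat.gcd d r ≠ 0 := by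
          intro h; exact hd0 (Nat.eq_zero_of_gcd_eq_zero_left h)
        have hgle : Nat.gcd d r ≤ d := Nat.gcd_le_left r (Nat.pos_of_ne_zero hd0)
        have hge : d ≤ Nat.gcd d r := hdmin _ hg0 hgP (by omega)
        have : Nat.gcd d r = d := le_antisymm hgle hge
        rw [← this]
        exact Nat.gcd_dvd_right d r
      have ht2 : 2 ≤ t := by omega
      set P : ℕ → Prop := fun j => t ≤ 2 ^ (k + 1) * (X - j * d) with hPdef
      have hP0 : P 0 := by simpa [hPdef] using ha1
      have hPmono : ∀ j j', j ≤ j' → P j' → P j := by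
        intro j j' hjj hPj'
        have : 2 ^ (k + 1) * (X - j' * d) ≤ 2 ^ (k + 1) * (X - j * d) := by
          apply Nat.mul_le_mul_left
          have : j * d ≤ j' * d := Nat.mul_le_mul_right d hjj
          omega
        exact le_trans hPj' this
      -- P j implies 2 * (j * d) ≤ X
      have hPsmall : ∀ j, P j → 2 * (j * d) ≤ X := by
        intro j hPj
        rcases le_or_gt (j * d) X with hjX | hjX
        · have h1 : 2 ^ k * X ≤ 2 ^ k * (2 * (X - j * d)) := by
            calc 2 ^ k * X ≤ t := ha2
              _ ≤ 2 ^ (k + 1) * (X - j * d) := hPj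
              _ = 2 ^ k * (2 * (X - j * d)) := by rw [hpow1]; ring
          have h2 : X ≤ 2 * (X - j * d) := Nat.le_of_mul_le_mul_left h1 hpow
          omega
        · exfalso
          have hz : X - j * d = 0 := by omega
          have hPj' : t ≤ 2 ^ (k + 1) * (X - j * d) := hPj
          rw [hz, Nat.mul_zero] at hPj'
          omega
      set J : ℕ := Nat.findGreatest P X with hJdef
      refine ⟨a, d, J + 1, ?_⟩
      intro p
      constructor
      · rintro ⟨hpt, hpP, hp1, hp2⟩
        have hap : a ≤ p := hamin p ⟨hpt, hpP, hp1, hp2⟩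
        obtain ⟨hrP, hr2⟩ := claimA p ⟨hpt, hpP, hp1, hp2⟩
        obtain ⟨j, hj0⟩ := hdvd (p - a) hrP hr2
        have hj : p - a = j * d := by rw [hj0, Nat.mul_comm]
        have hpaj : p = a + j * d := by omega
        have hPj : P j := by
          show t ≤ 2 ^ (k + 1) * (X - j * d)
          have hxe : X - j * d = t - p := by omega
          rw [hxe]; exact hp1
        have hjX : j ≤ X := by
          have hd1 : 1 ≤ d := by omega
          have : j * 1 ≤ j * d := Nat.mul_le_mul_left j hd1
          omega
        exact ⟨j, by have := Nat.le_findGreatest hjX hPj; omega, hpaj⟩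
      · rintro ⟨j, hjm, rfl⟩
        have hPJ : P J := Nat.findGreatest_spec (Nat.zero_le X) hP0
        have hPj : P j := hPmono j J (by omega) hPJ
        have h2jd : 2 * (j * d) ≤ X := hPsmall j hPj
        have hjdP : PerQ T X (j * d) := perQ_mul hdP j
        refine ⟨by omega, perQ_extend haP hjdP, ?_, ?_⟩
        · have : t - (a + j * d) = X - j * d := by omega
          rw [this]; exact hPj
        · have h1 : 2 ^ k * (t - (a + j * d)) ≤ 2 ^ k * X := by
            apply Nat.mul_le_mul_left; omega
          exact le_trans h1 ha2
    · -- no nontrivial small period: S = {a}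
      refine ⟨a, 0, 1, ?_⟩
      intro p
      constructor
      · intro hp
        obtain ⟨hrP, hr2⟩ := claimA p hp
        have hap : a ≤ p := hamin p hp
        have hpa : p - a = 0 := by
          by_contra h
          exact hd ⟨p - a, h, hrP, hr2⟩
        exact ⟨0, Nat.zero_lt_one, by omega⟩
      · rintro ⟨i, hi, rfl⟩
        have : i = 0 := by omega
        subst this
        simpa using ⟨hat, haP, ha1, ha2⟩
  · -- empty case
    refine ⟨0, 0, 0, ?_⟩
    intro p
    constructor
    · intro hp; exact absurd ⟨p, hp⟩ hS
    · rintro ⟨i, hi, _⟩; omega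

/-- The set of periods `p` of `T` lying between `t − t/2^k` and `t − t/2^{k+1}`
forms a single arithmetic progression. -/
theorem stmt_9 {α : Type*} (T : List α) (k : ℕ) :
    ∃ a d m : ℕ,
      {p : ℕ | p ≤ T.length ∧
          (∀ i, i + p < T.length → T[i]? = T[i + p]?) ∧
          T.length ≤ 2 ^ (k + 1) * (T.length - p) ∧
          2 ^ k * (T.length - p) ≤ T.length} =
        {x : ℕ | ∃ i < m, x = a + i * d} := by
  obtain ⟨a, d, m, h⟩ := stmt_9_aux T k
  refine ⟨a, d, m, ?_⟩
  ext p
  simpa [PerQ] using h p
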